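/- Let (Φ_n)_{n≥0} be a homogeneous Markov chain on a measurable space (X, B(X)) and V : X → [1,∞) a function such that E_x[V(Φ_1)] ≤ (1−ρ)V(x) + D·1_C(x) for all x, where 0 < ρ < 1, D > 0, and C ∈ B(X). Then for any 0 < r < −ln(1−ρ), sup_{x∈X} U_C(x,r,V)/V(x) ≤ ((1−ρ)e^r + D e^r)/(1 − (1−ρ)e^r), where U_C(x,r,V) = E_x[ sum_{j=1}^{τ_C} e^{rj} V(Φ_j) ] and τ_C = inf{n ≥ 1 : Φ_n ∈ C}. -/

import Mathlib

open MeasureTheory ProbabilityTheory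

variable {X : Type*} [MeasurableSpace X]

/-- `Pr` is the family of path measures of the homogeneous Markov chain with
transition kernel `K`: `Pr x` is a probability on trajectories, starts at `x`,
and satisfies the Markov property with one-step kernel `K`. -/
def IsMarkovFamily (K : Kernel X X) (Pr : X → Measure (ℕ → X)) : Prop :=
  (∀ x, IsProbabilityMeasure (Pr x)) ∧
  (∀ x, Pr x {ω | ω 0 = x} = 1) ∧
  (∀ x (n : ℕ) (B : Set (Fin (n + 1) → X)), MeasurableSet B →
    ∀ f : X → ENNReal, Measurable f →
      ∫⁻ ω in {ω | (fun i : Fin (n + 1) => ω i.1) ∈ B}, f (ω (n + 1)) ∂ Pr x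
        = ∫⁻ ω in {ω | (fun i : Fin (n + 1) => ω i.1) ∈ B},
            ∫⁻ y, f y ∂ (K (ω n)) ∂ Pr x)

/-- First hitting time (at time ≥ 1) of the set `C`, valued in `ℕ∞`. -/
noncomputable def hitTime (C : Set X) (ω : ℕ → X) : ℕ∞ :=
  sInf {m : ℕ∞ | ∃ k : ℕ, m = k ∧ 1 ≤ k ∧ ω k ∈ C}

/-- `U_A(x,s,V) = E_x[∑_{j=1}^{τ_A} e^{sj} V(Φ_j)]`. -/
noncomputable def hitSum (Pr : X → Measure (ℕ → X)) (A : Set X) (s : ℝ)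
    (V : X → ENNReal) (x : X) : ENNReal :=
  ∫⁻ ω, ∑' j : ℕ,
    Set.indicator {ω' : ℕ → X | 1 ≤ j ∧ (j : ℕ∞) ≤ hitTime A ω'}
      (fun _ => ENNReal.ofReal (Real.exp (s * j)) * V (ω j)) ω ∂ Pr x

lemma hitTime_le_iff (C : Set X) (ω : ℕ → X) (j : ℕ) :
    (j : ℕ∞) ≤ hitTime C ω ↔ ∀ k : ℕ, 1 ≤ k → k < j → ω k ∉ C := by
  unfold hitTime
  rw [le_sInf_iff]
  constructor
  · intro h k h1 hk hkC
    have h2 := h (k : ℕ∞) ⟨k, rfl, h1, hkC⟩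
    have : j ≤ k := by exact_mod_cast h2
    omega
  · rintro h m ⟨k, rfl, h1, hkC⟩
    by_contra hc
    have hk : k < j := by
      have := not_le.mp hc
      exact_mod_cast this
    exact h k h1 hk hkC


/-- under the drift condition
`E_x V(Φ_1) ≤ (1−ρ)V(x) + D 1_C(x)`, for any `0 < r < −ln(1−ρ)`,
`U_C(x,r,V) ≤ ((1−ρ)eʳ + Deʳ)/(1−(1−ρ)eʳ) · V(x)` for every `x`. -/
theorem drift_implies_exponential_return_sum
    (K : Kernel X X) [IsMarkovKernel K] (Pr : X → Measure (ℕ → X))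
    (hchain : IsMarkovFamily K Pr)
    (C : Set X) (hC : MeasurableSet C)
    (V : X → ENNReal) (hVmeas : Measurable V) (hV1 : ∀ x, 1 ≤ V x)
    (ρ D : ℝ) (hρ : 0 < ρ) (hρ1 : ρ < 1) (hD : 0 < D)
    (hdrift : ∀ x, ∫⁻ y, V y ∂ K x
        ≤ ENNReal.ofReal (1 - ρ) * V x
          + ENNReal.ofReal D * C.indicator 1 x)
    (r : ℝ) (hr : 0 < r) (hr' : r < -Real.log (1 - ρ)) :
    ∀ x, hitSum Pr C r V x
      ≤ ENNReal.ofReal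
          (((1 - ρ) * Real.exp r + D * Real.exp r) / (1 - (1 - ρ) * Real.exp r))
        * V x := by
  intro x
  have hprob : IsProbabilityMeasure (Pr x) := hchain.1 x
  have h1ρ : (0:ℝ) < 1 - ρ := by linarith
  have he : (0:ℝ) < Real.exp r := Real.exp_pos r
  -- real geometric ratio
  set β : ℝ := (1 - ρ) * Real.exp r with hβdef
  have hβ0 : 0 ≤ β := by positivity
  have hβ1 : β < 1 := by
    have h1 : r < Real.log (1 - ρ)⁻¹ := by
      rw [Real.log_inv]; linarith
    have h2 : Real.exp r < (1 - ρ)⁻¹ := by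
      calc Real.exp r < Real.exp (Real.log (1 - ρ)⁻¹) := Real.exp_lt_exp.mpr h1
        _ = (1 - ρ)⁻¹ := Real.exp_log (by positivity)
    calc β < (1 - ρ) * (1 - ρ)⁻¹ := by
            exact mul_lt_mul_of_pos_left h2 h1ρ
      _ = 1 := mul_inv_cancel₀ (ne_of_gt h1ρ)
  have h1β : (0:ℝ) < 1 - β := by linarith
  -- ENNReal constants
  set E : ENNReal := ENNReal.ofReal (Real.exp r) with hEdef
  set P : ENNReal := ENNReal.ofReal (1 - ρ) with hPdef
  set B : ENNReal := ENNReal.ofReal β with hBdef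
  have hEP : E * P = B := by
    rw [hEdef, hPdef, hBdef, hβdef, ← ENNReal.ofReal_mul he.le, mul_comm]
  set d : ENNReal := ENNReal.ofReal (D * Real.exp r) with hddef
  -- the sets
  set T : ℕ → Set (ℕ → X) := fun j => {ω | ∀ k : ℕ, 1 ≤ k → k < j → ω k ∉ C} with hTdef
  have hT : ∀ j, MeasurableSet (T j) := by
    intro j
    have hrw : T j = ⋂ k : ℕ, {ω : ℕ → X | 1 ≤ k → k < j → ω k ∉ C} := by
      ext ω; simp [hTdef, Set.mem_iInter]
    rw [hrw]
    refine MeasurableSet.iInter fun k => ?_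
    by_cases hk : 1 ≤ k ∧ k < j
    · have : {ω : ℕ → X | 1 ≤ k → k < j → ω k ∉ C} = (fun ω : ℕ → X => ω k) ⁻¹' Cᶜ := by
        ext ω; simp [hk.1, hk.2]
      rw [this]; exact (measurable_pi_apply k) hC.compl
    · have : {ω : ℕ → X | 1 ≤ k → k < j → ω k ∉ C} = Set.univ := by
        ext ω; simp only [Set.mem_setOf_eq, Set.mem_univ, iff_true]
        intro h1 h2; exact absurd ⟨h1, h2⟩ hk
      rw [this]; exact MeasurableSet.univ
  have hTmono : ∀ j, T (j + 1) ⊆ T j := by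
    intro j ω hω k h1 hk
    exact hω k h1 (by omega)
  -- b j
  have hVj : ∀ j : ℕ, Measurable fun ω : ℕ → X => V (ω j) :=
    fun j => hVmeas.comp (measurable_pi_apply j)
  set b : ℕ → ENNReal := fun j => ∫⁻ ω in T j, V (ω j) ∂ Pr x with hbdef
  -- b 1 bound
  set c : ENNReal := P * V x + ENNReal.ofReal D with hcdef
  have hb1 : b 1 ≤ c := by
    have hM := hchain.2.2 x 0 (Set.univ : Set (Fin 1 → X)) MeasurableSet.univ V hVmeas
    have huniv : {ω : ℕ → X | (fun i : Fin 1 => ω i.1) ∈ (Set.univ : Set (Fin 1 → X))}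
        = Set.univ := by ext ω; simp
    rw [huniv, Measure.restrict_univ] at hM
    have hT1 : T 1 = Set.univ := by
      ext ω; simp only [hTdef, Set.mem_setOf_eq, Set.mem_univ, iff_true]
      intro k h1 hk; omega
    have hb1eq : b 1 = ∫⁻ ω, ∫⁻ y, V y ∂ K (ω 0) ∂ Pr x := by
      rw [hbdef]; simp only [hT1, Measure.restrict_univ]; exact hM
    rw [hb1eq]
    -- a.e. bound
    have hGmeas : Measurable (fun ω : ℕ → X => ∫⁻ y, V y ∂ K (ω 0)) :=
      (hVmeas.lintegral_kernel (κ := K)).comp (measurable_pi_apply 0)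
    have hAx : ∫⁻ y, V y ∂ K x ≤ c := by
      refine (hdrift x).trans ?_
      rw [hcdef]
      gcongr
      by_cases hx : x ∈ C
      · simp [Set.indicator_of_mem hx]
      · simp [Set.indicator_of_notMem hx]
    set A : Set (ℕ → X) := (fun ω : ℕ → X => ∫⁻ y, V y ∂ K (ω 0)) ⁻¹' (Set.Iic c) with hAdef
    have hAmeas : MeasurableSet A := hGmeas measurableSet_Iic
    have hSA : {ω : ℕ → X | ω 0 = x} ⊆ A := by
      intro ω hω
      simp only [hAdef, Set.mem_preimage, Set.mem_Iic]
      rw [Set.mem_setOf_eq] at hω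
      rw [hω]; exact hAx
    have hA1 : Pr x A = 1 := by
      refine le_antisymm prob_le_one ?_
      calc (1 : ENNReal) = Pr x {ω | ω 0 = x} := (hchain.2.1 x).symm
        _ ≤ Pr x A := measure_mono hSA
    have hAc : Pr x Aᶜ = 0 := by
      rw [measure_compl hAmeas (measure_ne_top _ _), hA1, measure_univ, tsub_self]
    have hae : ∀ᵐ ω ∂ Pr x, (∫⁻ y, V y ∂ K (ω 0)) ≤ c := by
      have hcompl : {ω : ℕ → X | ¬ (∫⁻ y, V y ∂ K (ω 0)) ≤ c} = Aᶜ := by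
        ext ω; simp [hAdef]
      rw [ae_iff, hcompl]; exact hAc
    calc ∫⁻ ω, ∫⁻ y, V y ∂ K (ω 0) ∂ Pr x ≤ ∫⁻ _, c ∂ Pr x := lintegral_mono_ae hae
      _ = c := by rw [lintegral_const, measure_univ, mul_one]
  -- recursion
  have hkey : ∀ j : ℕ, 1 ≤ j → b (j + 1) ≤ P * b j := by
    intro j hj
    set B' : Set (Fin (j + 1) → X) := {v | ∀ k : Fin (j + 1), 1 ≤ (k : ℕ) → v k ∉ C}
      with hB'def
    have hB'meas : MeasurableSet B' := by
      have : B' = ⋂ k : Fin (j + 1), {v : Fin (j + 1) → X | 1 ≤ (k : ℕ) → v k ∉ C} := by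
        ext v; simp [hB'def, Set.mem_iInter]
      rw [this]
      refine MeasurableSet.iInter fun k => ?_
      by_cases hk : 1 ≤ (k : ℕ)
      · have : {v : Fin (j + 1) → X | 1 ≤ (k : ℕ) → v k ∉ C}
            = (fun v : Fin (j + 1) → X => v k) ⁻¹' Cᶜ := by ext v; simp [hk]
        rw [this]; exact (measurable_pi_apply k) hC.compl
      · have : {v : Fin (j + 1) → X | 1 ≤ (k : ℕ) → v k ∉ C} = Set.univ := by
          ext v; simp only [Set.mem_setOf_eq, Set.mem_univ, iff_true]
          intro h; exact absurd h hk
        rw [this]; exact MeasurableSet.univ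
    have hset : {ω : ℕ → X | (fun i : Fin (j + 1) => ω i.1) ∈ B'} = T (j + 1) := by
      ext ω
      simp only [hB'def, Set.mem_setOf_eq, hTdef]
      constructor
      · intro h k h1 hk
        exact h ⟨k, by omega⟩ h1
      · intro h k hk
        exact h (k : ℕ) hk k.2
    have hM := hchain.2.2 x j B' hB'meas V hVmeas
    rw [hset] at hM
    have hmemC : ∀ ω ∈ T (j + 1), ω j ∉ C := by
      intro ω hω; exact hω j hj (by omega)
    calc b (j + 1) = ∫⁻ ω in T (j + 1), ∫⁻ y, V y ∂ K (ω j) ∂ Pr x := hM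
      _ ≤ ∫⁻ ω in T (j + 1), P * V (ω j) ∂ Pr x := by
          refine setLIntegral_mono' (hT (j + 1)) fun ω hω => ?_
          refine (hdrift (ω j)).trans ?_
          rw [Set.indicator_of_notMem (hmemC ω hω)]
          simp [hPdef]
      _ = P * ∫⁻ ω in T (j + 1), V (ω j) ∂ Pr x := by
          rw [lintegral_const_mul _ (hVj j)]
      _ ≤ P * ∫⁻ ω in T j, V (ω j) ∂ Pr x := by
          gcongr
          exact hTmono j
      _ = P * b j := rfl
  -- induction
  have hind : ∀ n : ℕ, b (n + 1) ≤ P ^ n * b 1 := by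
    intro n
    induction n with
    | zero => simp
    | succ m ih =>
      calc b (m + 2) ≤ P * b (m + 1) := hkey (m + 1) (by omega)
        _ ≤ P * (P ^ m * b 1) := by gcongr
        _ = P ^ (m + 1) * b 1 := by ring
  -- the summands
  set I : ℕ → ENNReal := fun j => ∫⁻ ω,
      Set.indicator {ω' : ℕ → X | 1 ≤ j ∧ (j : ℕ∞) ≤ hitTime C ω'}
        (fun _ => ENNReal.ofReal (Real.exp (r * j)) * V (ω j)) ω ∂ Pr x with hIdef
  have hS : ∀ j : ℕ, 1 ≤ j →
      {ω' : ℕ → X | 1 ≤ j ∧ (j : ℕ∞) ≤ hitTime C ω'} = T j := by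
    intro j hj
    ext ω
    simp only [Set.mem_setOf_eq, hTdef, hj, true_and]
    exact hitTime_le_iff C ω j
  have hI0 : I 0 = 0 := by
    have : {ω' : ℕ → X | 1 ≤ 0 ∧ ((0:ℕ) : ℕ∞) ≤ hitTime C ω'} = (∅ : Set (ℕ → X)) := by
      ext ω; simp
    rw [hIdef]
    simp only [this, Set.indicator_empty, lintegral_zero]
  have hindrw : ∀ (j : ℕ) (ω : ℕ → X),
      (T j).indicator (fun _ => ENNReal.ofReal (Real.exp (r * j)) * V (ω j)) ω
        = (T j).indicator (fun ω' => ENNReal.ofReal (Real.exp (r * j)) * V (ω' j)) ω := by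
    intro j ω
    by_cases h : ω ∈ T j <;> simp [h]
  have hIval : ∀ j : ℕ, 1 ≤ j → I j = ENNReal.ofReal (Real.exp (r * j)) * b j := by
    intro j hj
    rw [hIdef]
    simp only [hS j hj, hindrw j]
    rw [lintegral_indicator (hT j), lintegral_const_mul _ (hVj j)]
  -- swap
  have hswap : hitSum Pr C r V x = ∑' j : ℕ, I j := by
    rw [hitSum]
    rw [lintegral_tsum]
    intro j
    refine Measurable.aemeasurable ?_
    by_cases hj : 1 ≤ j
    · simp only [hS j hj, hindrw j]
      exact (Measurable.indicator ((measurable_const).mul (hVj j)) (hT j))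
    · have hj0 : j = 0 := by omega
      subst hj0
      have : {ω' : ℕ → X | 1 ≤ 0 ∧ ((0:ℕ) : ℕ∞) ≤ hitTime C ω'} = (∅ : Set (ℕ → X)) := by
        ext ω; simp
      rw [this]
      simp only [Set.indicator_empty]
      exact measurable_const
  -- termwise bound
  have hexp : ∀ n : ℕ, ENNReal.ofReal (Real.exp (r * (n + 1))) = E ^ (n + 1) := by
    intro n
    rw [hEdef, ← ENNReal.ofReal_pow he.le]
    congr 1
    rw [← Real.exp_nat_mul]
    congr 1
    push_cast
    ring
  have hterm : ∀ n : ℕ, I (n + 1) ≤ B ^ n * (E * c) := by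
    intro n
    rw [hIval (n + 1) (by omega)]
    push_cast
    rw [hexp n]
    calc E ^ (n + 1) * b (n + 1) ≤ E ^ (n + 1) * (P ^ n * b 1) := by
          gcongr; exact hind n
      _ ≤ E ^ (n + 1) * (P ^ n * c) := by gcongr
      _ = (E * P) ^ n * (E * c) := by ring
      _ = B ^ n * (E * c) := by rw [hEP]
  -- sum up
  have hsum : hitSum Pr C r V x ≤ (1 - B)⁻¹ * (E * c) := by
    rw [hswap, tsum_eq_zero_add' ENNReal.summable, hI0, zero_add]
    calc ∑' n : ℕ, I (n + 1) ≤ ∑' n : ℕ, B ^ n * (E * c) := ENNReal.tsum_le_tsum hterm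
      _ = (∑' n : ℕ, B ^ n) * (E * c) := ENNReal.tsum_mul_right
      _ = (1 - B)⁻¹ * (E * c) := by rw [ENNReal.tsum_geometric]
  refine hsum.trans ?_
  -- final arithmetic
  have hEc : E * c ≤ (B + d) * V x := by
    rw [hcdef]
    have : E * (P * V x + ENNReal.ofReal D) = B * V x + E * ENNReal.ofReal D := by
      rw [← hEP]; ring
    rw [this]
    have hEd : E * ENNReal.ofReal D = d := by
      rw [hEdef, hddef, ← ENNReal.ofReal_mul he.le, mul_comm]
    rw [hEd, add_mul]
    gcongr
    calc d = d * 1 := (mul_one d).symm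
      _ ≤ d * V x := by gcongr; exact hV1 x
  calc (1 - B)⁻¹ * (E * c) ≤ (1 - B)⁻¹ * ((B + d) * V x) := by gcongr
    _ = ((1 - B)⁻¹ * (B + d)) * V x := by ring
    _ = ENNReal.ofReal ((β + D * Real.exp r) / (1 - β)) * V x := by
        congr 1
        have h1B : (1 : ENNReal) - B = ENNReal.ofReal (1 - β) := by
          rw [hBdef, ← ENNReal.ofReal_one, ← ENNReal.ofReal_sub _ hβ0]
        rw [h1B, ← ENNReal.ofReal_inv_of_pos h1β, hBdef, hddef,
          ← ENNReal.ofReal_add hβ0 (by positivity),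
          ← ENNReal.ofReal_mul (by positivity)]
        congr 1
        rw [div_eq_inv_mul]
    _ = ENNReal.ofReal
          (((1 - ρ) * Real.exp r + D * Real.exp r) / (1 - (1 - ρ) * Real.exp r)) * V x := by
        rfl
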